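/- Let K be a field of characteristic ≠ 2, let d ≥ 2, and let M, M' be skew-symmetric d×d matrices over K (Mᵀ = −M and M'ᵀ = −M'). Assume that the kernels of the linear maps v ↦ M·v and v ↦ M'·v coincide and have dimension d − 2. Then there exists r ∈ K with M' = r • M. -/
import Mathlib

open Matrix

/-- Two skew-symmetric `d × d` matrices over a field of characteristic `≠ 2`,
whose kernels coincide and have dimension `d − 2`, are proportional. -/
theorem skew_matrices_proportional_of_common_kernel
    (K : Type*) [Field K] (hchar : ringChar K ≠ 2)
    (d : ℕ) (hd : 2 ≤ d)
    (M M' : Matrix (Fin d) (Fin d) K)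
    (hM : Mᵀ = -M) (hM' : M'ᵀ = -M')
    (hker : LinearMap.ker M.mulVecLin = LinearMap.ker M'.mulVecLin)
    (hdim : Module.finrank K (LinearMap.ker M.mulVecLin) = d - 2) :
    ∃ r : K, M' = r • M := by
  have h2 : (2 : K) ≠ 0 := Ring.two_ne_zero hchar
  -- skew matrices are alternating
  have alt : ∀ (P : Matrix (Fin d) (Fin d) K), Pᵀ = -P →
      ∀ x : Fin d → K, x ⬝ᵥ (P *ᵥ x) = 0 := by
    intro P hP x
    have h1 : x ⬝ᵥ (P *ᵥ x) = -(x ⬝ᵥ (P *ᵥ x)) := by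
      calc x ⬝ᵥ (P *ᵥ x) = (x ᵥ* P) ⬝ᵥ x := by rw [Matrix.dotProduct_mulVec]
        _ = (Pᵀ *ᵥ x) ⬝ᵥ x := by rw [Matrix.mulVec_transpose]
        _ = -(x ⬝ᵥ (P *ᵥ x)) := by
            rw [hP, Matrix.neg_mulVec, neg_dotProduct, dotProduct_comm]
    have h3 : 2 * (x ⬝ᵥ (P *ᵥ x)) = 0 := by
      rw [two_mul]; nth_rewrite 2 [h1]; ring
    exact (mul_eq_zero.mp h3).resolve_left h2
  -- skew swap
  have swap : ∀ (P : Matrix (Fin d) (Fin d) K), Pᵀ = -P →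
      ∀ x y : Fin d → K, x ⬝ᵥ (P *ᵥ y) = -(y ⬝ᵥ (P *ᵥ x)) := by
    intro P hP x y
    calc x ⬝ᵥ (P *ᵥ y) = (x ᵥ* P) ⬝ᵥ y := by rw [Matrix.dotProduct_mulVec]
      _ = (Pᵀ *ᵥ x) ⬝ᵥ y := by rw [Matrix.mulVec_transpose]
      _ = -(y ⬝ᵥ (P *ᵥ x)) := by
          rw [hP, Matrix.neg_mulVec, neg_dotProduct, dotProduct_comm]
  set W := LinearMap.ker M.mulVecLin with hWdef
  -- M is nonzero
  have hMne : M ≠ 0 := by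
    intro h
    have : W = ⊤ := by
      rw [hWdef, h]
      simp [Matrix.mulVecLin_zero]
    rw [this] at hdim
    simp [Module.finrank_fintype_fun_eq_card] at hdim
    omega
  -- find a, b with a ⬝ᵥ M *ᵥ b ≠ 0
  obtain ⟨i, j, hij⟩ : ∃ i j, M i j ≠ 0 := by
    by_contra h
    push_neg at h
    exact hMne (by ext i j; exact h i j)
  set a : Fin d → K := Pi.single i 1 with ha
  set b : Fin d → K := Pi.single j 1 with hb
  have hab : a ⬝ᵥ (M *ᵥ b) ≠ 0 := by
    simpa [ha, hb, Matrix.mulVec_single, single_dotProduct] using hij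
  set r : K := (a ⬝ᵥ (M' *ᵥ b)) / (a ⬝ᵥ (M *ᵥ b)) with hr
  set N : Matrix (Fin d) (Fin d) K := M' - r • M with hN
  have hNskew : Nᵀ = -N := by
    rw [hN, Matrix.transpose_sub, Matrix.transpose_smul, hM, hM']
    ext k l
    simp
    ring
  -- N kills W
  have hNW : ∀ w ∈ W, N *ᵥ w = 0 := by
    intro w hw
    have h1 : M *ᵥ w = 0 := hw
    have h2' : M' *ᵥ w = 0 := by
      have : w ∈ LinearMap.ker M'.mulVecLin := hker ▸ hw
      exact this
    rw [hN, Matrix.sub_mulVec, Matrix.smul_mulVec, h1, h2']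
    simp
  have hNab : a ⬝ᵥ (N *ᵥ b) = 0 := by
    rw [hN, Matrix.sub_mulVec, Matrix.smul_mulVec, dotProduct_sub,
      dotProduct_smul, hr, smul_eq_mul, div_mul_cancel₀ _ hab, sub_self]
  -- every vector decomposes as α•a + β•b + w with w ∈ W
  have hdecomp : ∀ x : Fin d → K, ∃ α β : K, ∃ w, w ∈ W ∧ x = α • a + β • b + w := by
    have hfin : Module.finrank K ((Fin d → K) ⧸ W) = 2 := by
      have := W.finrank_quotient_add_finrank
      rw [hdim, Module.finrank_fintype_fun_eq_card] at this
      simp at this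
      omega
    set π := W.mkQ with hπ
    have hli : LinearIndependent K ![π a, π b] := by
      rw [LinearIndependent.pair_iff]
      intro s t hst
      have hmem : s • a + t • b ∈ W := by
        rw [← Submodule.Quotient.mk_eq_zero W]
        simpa [π, Submodule.mkQ_apply] using hst
      have hMab : M *ᵥ (s • a + t • b) = 0 := hmem
      constructor
      · have := congrArg (fun v => b ⬝ᵥ v) hMab
        simp only [Matrix.mulVec_add, Matrix.mulVec_smul, dotProduct_add,
          dotProduct_smul, smul_eq_mul, alt M hM b, mul_zero, add_zero] at this
        have hba : b ⬝ᵥ (M *ᵥ a) = -(a ⬝ᵥ (M *ᵥ b)) := swap M hM b a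
        rw [hba] at this
        simp only [dotProduct_zero] at this
        rw [mul_neg, neg_eq_zero] at this
        exact (mul_eq_zero.mp this).resolve_right hab
      · have := congrArg (fun v => a ⬝ᵥ v) hMab
        simp only [Matrix.mulVec_add, Matrix.mulVec_smul, dotProduct_add,
          dotProduct_smul, smul_eq_mul, alt M hM a, mul_zero, zero_add] at this
        simp only [dotProduct_zero] at this
        exact (mul_eq_zero.mp this).resolve_right hab
    have hspan : Submodule.span K (Set.range ![π a, π b]) = ⊤ :=
      hli.span_eq_top_of_card_eq_finrank (by simp [hfin])
    intro x
    have hx : π x ∈ Submodule.span K ({π a, π b} : Set ((Fin d → K) ⧸ W)) := by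
      have : Set.range ![π a, π b] = {π a, π b} := by
        ext z; simp [Fin.exists_fin_two, or_comm]
      rw [← this, hspan]; trivial
    obtain ⟨α, β, hαβ⟩ := Submodule.mem_span_pair.mp hx
    refine ⟨α, β, x - (α • a + β • b), ?_, by abel⟩
    have hz : π (x - (α • a + β • b)) = 0 := by
      rw [map_sub, map_add, _root_.map_smul, _root_.map_smul, hαβ, sub_self]
    rwa [hπ, Submodule.mkQ_apply, Submodule.Quotient.mk_eq_zero] at hz
  -- now show the bilinear form of N vanishes
  have hzero : ∀ x y : Fin d → K, x ⬝ᵥ (N *ᵥ y) = 0 := by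
    have hcol : ∀ u : Fin d → K, (u = a ∨ u = b) → ∀ y, u ⬝ᵥ (N *ᵥ y) = 0 := by
      intro u hu y
      obtain ⟨γ, δ, w, hw, rfl⟩ := hdecomp y
      have h1 : u ⬝ᵥ (N *ᵥ w) = 0 := by rw [hNW w hw, dotProduct_zero]
      have haa : a ⬝ᵥ (N *ᵥ a) = 0 := alt N hNskew a
      have hbb : b ⬝ᵥ (N *ᵥ b) = 0 := alt N hNskew b
      have hba : b ⬝ᵥ (N *ᵥ a) = 0 := by rw [swap N hNskew b a, hNab, neg_zero]
      rcases hu with rfl | rfl <;>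
        simp [Matrix.mulVec_add, Matrix.mulVec_smul, dotProduct_add,
          dotProduct_smul, haa, hbb, hba, hNab, h1]
    intro x y
    obtain ⟨α, β, w, hw, rfl⟩ := hdecomp x
    have h1 : w ⬝ᵥ (N *ᵥ y) = -(y ⬝ᵥ (N *ᵥ w)) := swap N hNskew w y
    rw [hNW w hw, dotProduct_zero, neg_zero] at h1
    simp [add_dotProduct, smul_dotProduct, hcol a (Or.inl rfl) y,
      hcol b (Or.inr rfl) y, h1]
  refine ⟨r, ?_⟩
  have hN0 : N = 0 := by
    ext k l
    have := hzero (Pi.single k 1) (Pi.single l 1)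
    simpa [Matrix.mulVec_single, single_dotProduct] using this
  have := sub_eq_zero.mp (hN ▸ hN0)
  exact this
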